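/- If h : 𝔻 → (-1,1) is a real-valued harmonic function with h(0) = a, then for all z ∈ 𝔻, h(z) ≥ 1 − (4/π)·arctan(e(a)·(1+|z|)/(1-|z|)), where e(a) = cot(π(a+1)/4). -/

import Mathlib

open Real Set Metric

private lemma normSq_sin_eq (z : ℂ) :
    Complex.normSq (Complex.sin z) = Real.sin z.re ^ 2 + Real.sinh z.im ^ 2 := by
  rw [Complex.sin_eq]
  rw [← Complex.ofReal_sin, ← Complex.ofReal_cos, ← Complex.ofReal_sinh, ← Complex.ofReal_cosh,
    ← Complex.ofReal_mul, ← Complex.ofReal_mul, Complex.normSq_add_mul_I]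
  nlinarith [Real.sin_sq_add_cos_sq z.re, Real.cosh_sq z.im]

private lemma normSq_cos_eq (z : ℂ) :
    Complex.normSq (Complex.cos z) = Real.cos z.re ^ 2 + Real.sinh z.im ^ 2 := by
  rw [Complex.cos_eq]
  rw [← Complex.ofReal_sin, ← Complex.ofReal_cos, ← Complex.ofReal_sinh, ← Complex.ofReal_cosh,
    ← Complex.ofReal_mul, ← Complex.ofReal_mul, sub_eq_add_neg, ← neg_mul,
    ← Complex.ofReal_neg, Complex.normSq_add_mul_I]
  nlinarith [Real.sin_sq_add_cos_sq z.re, Real.cosh_sq z.im]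

private lemma sin_sq_lt_cos_sq {s t : ℝ} (hs : s ∈ Set.Ioo (-1:ℝ) 1)
    (ht : t ∈ Set.Ioo (-1:ℝ) 1) :
    Real.sin (π/4*(s-t)) ^ 2 < Real.cos (π/4*(s+t)) ^ 2 := by
  have hπ := Real.pi_pos
  obtain ⟨hs1, hs2⟩ := hs
  obtain ⟨ht1, ht2⟩ := ht
  have hcs : 0 < Real.cos (π/2*s) :=
    Real.cos_pos_of_mem_Ioo ⟨by nlinarith, by nlinarith⟩
  have hct : 0 < Real.cos (π/2*t) :=
    Real.cos_pos_of_mem_Ioo ⟨by nlinarith, by nlinarith⟩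
  have h1 : Real.cos (π/2*s)
      = Real.cos (π/4*(s+t)) * Real.cos (π/4*(s-t))
        - Real.sin (π/4*(s+t)) * Real.sin (π/4*(s-t)) := by
    rw [← Real.cos_add]; ring_nf
  have h2 : Real.cos (π/2*t)
      = Real.cos (π/4*(s+t)) * Real.cos (π/4*(s-t))
        + Real.sin (π/4*(s+t)) * Real.sin (π/4*(s-t)) := by
    rw [← Real.cos_sub]; ring_nf
  nlinarith [Real.sin_sq_add_cos_sq (π/4*(s+t)), Real.sin_sq_add_cos_sq (π/4*(s-t)),
    mul_pos hcs hct]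

set_option maxHeartbeats 1000000 in
private lemma trig_conclusion {a s r : ℝ} (ha : a ∈ Set.Ioo (-1:ℝ) 1)
    (hs : s ∈ Set.Ioo (-1:ℝ) 1) (hr0 : 0 ≤ r) (hr1 : r < 1)
    (hXY : Real.sin (π/4*(s - a)) ^ 2 ≤ r^2 * Real.cos (π/4*(s + a)) ^ 2) :
    s ≥ 1 - (4 / π) * Real.arctan ((Real.tan (π * (a + 1) / 4))⁻¹ * (1 + r) / (1 - r)) := by
  have hπ := Real.pi_pos
  have hA : 0 < Real.cos (π/4*(s + a)) := by
    apply Real.cos_pos_of_mem_Ioo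
    constructor
    · nlinarith [hs.1, ha.1]
    · nlinarith [hs.2, ha.2]
  have hstep : -(Real.sin (π/4*(s - a))) ≤ r * Real.cos (π/4*(s + a)) := by
    nlinarith [hXY, mul_nonneg hr0 hA.le]
  set sa := Real.sin (π*a/4) with hsa
  set ca := Real.cos (π*a/4) with hca'
  set ss := Real.sin (π*s/4) with hss
  set cs := Real.cos (π*s/4) with hcs'
  have hexp1 : Real.sin (π/4*(s - a)) = ss * ca - cs * sa := by
    rw [show π/4*(s-a) = π*s/4 - π*a/4 by ring, Real.sin_sub]
  have hexp2 : Real.cos (π/4*(s + a)) = cs * ca - ss * sa := by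
    rw [show π/4*(s+a) = π*s/4 + π*a/4 by ring, Real.cos_add]
  have hcore : cs * (sa - r*ca) ≤ ss * (ca - r*sa) := by
    rw [hexp1, hexp2] at hstep
    nlinarith [hstep]
  have hca : 0 < ca := by
    apply Real.cos_pos_of_mem_Ioo
    constructor
    · nlinarith [ha.1]
    · nlinarith [ha.2]
  have hcs : 0 < cs := by
    apply Real.cos_pos_of_mem_Ioo
    constructor
    · nlinarith [hs.1]
    · nlinarith [hs.2]
  have hdiff : sa^2 < ca^2 := by
    have h2 : ca^2 - sa^2 = Real.cos (π*a/2) := by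
      rw [show π*a/2 = π*a/4 + π*a/4 by ring, Real.cos_add]; ring
    have hpos : 0 < Real.cos (π*a/2) := by
      apply Real.cos_pos_of_mem_Ioo
      constructor
      · nlinarith [ha.1]
      · nlinarith [ha.2]
    linarith
  have hms : sa < ca := by nlinarith
  have hps : -ca < sa := by nlinarith
  have hcrs : 0 < ca - r*sa := by
    nlinarith [mul_pos (show (0:ℝ) < 1 - r by linarith) (show (0:ℝ) < ca + sa by linarith),
      mul_pos (show (0:ℝ) < 1 + r by linarith) (show (0:ℝ) < ca - sa by linarith)]
  have h1r : (1:ℝ) + r ≠ 0 := by linarith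
  have h1r' : (1:ℝ) - r ≠ 0 := by linarith
  have hcasa : ca - sa ≠ 0 := by linarith
  set T := Real.tan (π*(a+1)/4) with hT
  have hTeq : T = (sa + ca)/(ca - sa) := by
    rw [hT, Real.tan_eq_sin_div_cos, show π*(a+1)/4 = π*a/4 + π/4 by ring,
      Real.sin_add, Real.cos_add, Real.sin_pi_div_four, Real.cos_pi_div_four,
      ← hsa, ← hca']
    rw [div_eq_div_iff]
    · ring
    · have h2 : (0:ℝ) < Real.sqrt 2 / 2 := by positivity
      nlinarith [h2, hms]
    · exact hcasa
  have hTpos : 0 < T := by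
    rw [hTeq]
    exact div_pos (by linarith) (by linarith)
  set S := T * (1 - r)/(1 + r) with hS
  have hSpos : 0 < S := by
    rw [hS]
    exact div_pos (mul_pos hTpos (by linarith)) (by linarith)
  have hSinv : T⁻¹ * (1 + r)/(1 - r) = S⁻¹ := by
    rw [hS]
    field_simp
  have hid : (S - 1)/(S + 1) = (sa - r*ca)/(ca - r*sa) := by
    have key2 : S * ((1 + r)*(ca - sa)) = (sa + ca)*(1 - r) := by
      rw [hS, hTeq]
      field_simp
    rw [div_eq_div_iff (by linarith) (ne_of_gt hcrs)]
    linear_combination key2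
  have hQ : (S - 1)/(S + 1) ≤ Real.tan (π*s/4) := by
    rw [hid, Real.tan_eq_sin_div_cos, ← hss, ← hcs']
    rw [div_le_div_iff₀ hcrs hcs]
    nlinarith [hcore]
  have harc1 : Real.arctan ((S - 1)/(S + 1)) ≤ π*s/4 := by
    have := Real.arctan_strictMono.monotone hQ
    rwa [Real.arctan_tan (by nlinarith [hs.1]) (by nlinarith [hs.2])] at this
  have harc2 : Real.arctan ((S - 1)/(S + 1)) = Real.arctan S - π/4 := by
    have hb1 : -(π/2) < Real.arctan S - π/4 := by
      have h' := Real.arctan_strictMono hSpos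
      rw [Real.arctan_zero] at h'
      linarith
    have hb2 : Real.arctan S - π/4 < π/2 := by
      have := Real.arctan_lt_pi_div_two S
      linarith
    rw [← Real.arctan_tan hb1 hb2]
    congr 1
    rw [Real.tan_eq_sin_div_cos, Real.sin_sub, Real.cos_sub, Real.sin_arctan, Real.cos_arctan,
      Real.sin_pi_div_four, Real.cos_pi_div_four]
    have hsq : (0:ℝ) < Real.sqrt (1 + S^2) := by positivity
    have h2 : (0:ℝ) < Real.sqrt 2 := by positivity
    have hS1 : S + 1 ≠ 0 := by linarith
    field_simp
    ring
  rw [hSinv, Real.arctan_inv_of_pos hSpos]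
  have hfin : Real.arctan S ≤ π*s/4 + π/4 := by
    have h' := harc1
    rw [harc2] at h'
    linarith
  have hmul : (4/π) * Real.arctan S ≤ (4/π) * (π*s/4 + π/4) := by
    apply mul_le_mul_of_nonneg_left hfin
    positivity
  have hsimp : (4/π) * (π*s/4 + π/4) = s + 1 := by
    field_simp
  have hrw : 1 - 4/π * (π/2 - Real.arctan S) = 4/π * Real.arctan S - 1 := by
    field_simp
    ring
  rw [ge_iff_le, hrw]
  linarith [hmul, hsimp ▸ hmul]

set_option maxHeartbeats 1000000 in
/-- Schwarz lemma (lower bound): if `h` is a real-valued harmonic function on the unit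
disk with values in `(-1,1)` and `h 0 = a`, then
`h z ≥ 1 - (4/π)·arctan (e(a)·(1+|z|)/(1-|z|))` with `e(a) = cot (π(a+1)/4)`.
Harmonicity is encoded by `h` being the real part of a holomorphic function `F`. -/
theorem harmonic_schwarz_lower (a : ℝ) (h : ℂ → ℝ) (F : ℂ → ℂ)
    (hF : DifferentiableOn ℂ F (Metric.ball 0 1))
    (hre : ∀ z ∈ Metric.ball (0 : ℂ) 1, h z = (F z).re)
    (hmaps : Set.MapsTo h (Metric.ball 0 1) (Set.Ioo (-1 : ℝ) 1))
    (h0 : h 0 = a) :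
    ∀ z ∈ Metric.ball (0 : ℂ) 1,
      h z ≥ 1 - (4 / Real.pi) *
          Real.arctan ((Real.tan (Real.pi * (a + 1) / 4))⁻¹ * (1 + ‖z‖) / (1 - ‖z‖)) := by
  intro z hz
  have hπ := Real.pi_pos
  have h0mem : (0:ℂ) ∈ Metric.ball (0:ℂ) 1 := Metric.mem_ball_self one_pos
  have hF0re : (F 0).re = a := by rw [← hre 0 h0mem, h0]
  have ha : a ∈ Set.Ioo (-1:ℝ) 1 := by rw [← h0]; exact hmaps h0mem
  set c : ℝ := (F 0).im with hc
  set num : ℂ → ℂ := fun w => Complex.sin (((π/4 : ℝ) : ℂ) * (F w - F 0)) with hnum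
  set den : ℂ → ℂ := fun w => Complex.cos (((π/4 : ℝ) : ℂ) * (F w + (starRingEnd ℂ) (F 0)))
    with hden
  have hnum_sq : ∀ w ∈ Metric.ball (0:ℂ) 1, Complex.normSq (num w)
      = Real.sin (π/4*(h w - a)) ^ 2 + Real.sinh (π/4*((F w).im - c)) ^ 2 := by
    intro w hw
    have e1 : ((((π/4 : ℝ) : ℂ) * (F w - F 0)).re) = π/4*(h w - a) := by
      rw [Complex.re_ofReal_mul, Complex.sub_re, hF0re, hre w hw]
    have e2 : ((((π/4 : ℝ) : ℂ) * (F w - F 0)).im) = π/4*((F w).im - c) := by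
      rw [Complex.im_ofReal_mul, Complex.sub_im, hc]
    rw [hnum, normSq_sin_eq, e1, e2]
  have hden_sq : ∀ w ∈ Metric.ball (0:ℂ) 1, Complex.normSq (den w)
      = Real.cos (π/4*(h w + a)) ^ 2 + Real.sinh (π/4*((F w).im - c)) ^ 2 := by
    intro w hw
    have e1 : ((((π/4 : ℝ) : ℂ) * (F w + (starRingEnd ℂ) (F 0))).re) = π/4*(h w + a) := by
      rw [Complex.re_ofReal_mul, Complex.add_re, Complex.conj_re, hF0re, hre w hw]
    have e2 : ((((π/4 : ℝ) : ℂ) * (F w + (starRingEnd ℂ) (F 0))).im)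
        = π/4*((F w).im - c) := by
      rw [Complex.im_ofReal_mul, Complex.add_im, Complex.conj_im, hc]; ring
    rw [hden, normSq_cos_eq, e1, e2]
  have hlt : ∀ w ∈ Metric.ball (0:ℂ) 1,
      Complex.normSq (num w) < Complex.normSq (den w) := by
    intro w hw
    rw [hnum_sq w hw, hden_sq w hw]
    have := sin_sq_lt_cos_sq (hmaps hw) ha
    linarith
  have hden0 : ∀ w ∈ Metric.ball (0:ℂ) 1, den w ≠ 0 := by
    intro w hw
    exact Complex.normSq_pos.mp (lt_of_le_of_lt (Complex.normSq_nonneg (num w)) (hlt w hw))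
  set G : ℂ → ℂ := fun w => num w / den w with hG
  have hnumdiff : DifferentiableOn ℂ num (Metric.ball (0:ℂ) 1) :=
    Complex.differentiable_sin.comp_differentiableOn
      ((hF.sub (differentiableOn_const _)).const_mul _)
  have hdendiff : DifferentiableOn ℂ den (Metric.ball (0:ℂ) 1) :=
    Complex.differentiable_cos.comp_differentiableOn
      ((hF.add (differentiableOn_const _)).const_mul _)
  have hGdiff : DifferentiableOn ℂ G (Metric.ball (0:ℂ) 1) :=
    hnumdiff.div hdendiff hden0
  have hGmaps : Set.MapsTo G (Metric.ball (0:ℂ) 1) (Metric.ball (0:ℂ) 1) := by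
    intro w hw
    rw [mem_ball_zero_iff]
    have hd0 : (0:ℝ) < ‖den w‖ := norm_pos_iff.mpr (hden0 w hw)
    have hlt' : ‖num w‖ < ‖den w‖ := by
      rw [Complex.norm_def, Complex.norm_def]
      exact Real.sqrt_lt_sqrt (Complex.normSq_nonneg _) (hlt w hw)
    rw [hG]
    simp only [norm_div]
    rw [div_lt_one hd0]
    exact hlt'
  have hG0 : G 0 = 0 := by
    simp [hG, hnum]
  have habs : ‖G z‖ ≤ ‖z‖ :=
    Complex.norm_le_norm_of_mapsTo_ball hGdiff (hGmaps.mono_right ball_subset_closedBall) hG0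
      (by simpa using mem_ball_zero_iff.mp hz)
  have hr0 : (0:ℝ) ≤ ‖z‖ := norm_nonneg z
  have hr1 : ‖z‖ < 1 := mem_ball_zero_iff.mp hz
  have hkey : Complex.normSq (num z) ≤ ‖z‖^2 * Complex.normSq (den z) := by
    have hd0 : (0:ℝ) < ‖den z‖ := norm_pos_iff.mpr (hden0 z hz)
    have h1 : ‖num z‖ ≤ ‖z‖ * ‖den z‖ := by
      rw [hG] at habs
      simp only [norm_div] at habs
      rw [div_le_iff₀ hd0] at habs
      simpa using habs
    have h2 : ‖num z‖ ^ 2 ≤ (‖z‖ * ‖den z‖) ^ 2 :=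
      pow_le_pow_left₀ (norm_nonneg _) h1 2
    calc Complex.normSq (num z) = ‖num z‖ ^ 2 := (Complex.sq_norm _).symm
      _ ≤ (‖z‖ * ‖den z‖) ^ 2 := h2
      _ = ‖z‖^2 * Complex.normSq (den z) := by rw [mul_pow, Complex.sq_norm (den z)]
  have hs : h z ∈ Set.Ioo (-1:ℝ) 1 := hmaps hz
  have hr2 : ‖z‖^2 ≤ 1 := by nlinarith
  have hXY : Real.sin (π/4*(h z - a)) ^ 2 ≤ ‖z‖^2 * Real.cos (π/4*(h z + a)) ^ 2 := by
    rw [hnum_sq z hz, hden_sq z hz] at hkey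
    nlinarith [hkey, mul_nonneg (sub_nonneg.mpr hr2) (sq_nonneg (Real.sinh (π/4*((F z).im - c))))]
  exact trig_conclusion ha hs hr0 hr1 hXY
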